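/- Let x be an aperiodic infinite word over a finite alphabet A, let k and d be positive integers, and let S ⊆ ℕ be a syndetic set with gaps smaller than d such that cl_x(n) < k for every n ∈ S. Let u be a recurrent factor of x, and let r and s be finite words of lengths k and k + d respectively such that the concatenation r u s is a factor of x. Then there exist a proper (possibly empty) suffix r′ of r and a proper (possibly empty) prefix s′ of s such that the word r′ u s′ is either right special or left special in x. -/

import Mathlib

/-- `w` occurs in the infinite word `x` at position `m`. -/
def OccursAt {A : Type*} (x : ℕ → A) (w : List A) (m : ℕ) : Prop :=
  w = (List.range w.length).map fun i => x (m + i)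

/-- `w` is a factor of the infinite word `x`. -/
def IsFactorOf {A : Type*} (x : ℕ → A) (w : List A) : Prop :=
  ∃ m, OccursAt x w m

/-- `w` is a recurrent factor of `x` : it occurs at infinitely many positions. -/
def IsRecurrentFactor {A : Type*} (x : ℕ → A) (w : List A) : Prop :=
  ∀ N, ∃ m, N ≤ m ∧ OccursAt x w m

/-- The set of positions at which `u` occurs inside the finite word `w`. -/
def occSet {A : Type*} (u w : List A) : Set ℕ := {i | u <+: w.drop i}

/-- `u` is a border of `w`: nonempty, strictly shorter than `w`,
and both a prefix and a suffix of `w`. -/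
def IsBorder {A : Type*} (u w : List A) : Prop :=
  0 < u.length ∧ u.length < w.length ∧ u <+: w ∧ u <:+ w

/-- A finite word is closed if it is a single letter or it has a border
occurring exactly twice in it. -/
def IsClosedWord {A : Type*} (w : List A) : Prop :=
  w.length = 1 ∨ ∃ u, IsBorder u w ∧ (occSet u w).ncard = 2

/-- A nonempty finite word is open if it is not closed. -/
def IsOpenWord {A : Type*} (w : List A) : Prop :=
  w ≠ [] ∧ ¬ IsClosedWord w

/-- The frontier of a closed word is its longest border. -/
def IsFrontier {A : Type*} (u w : List A) : Prop :=
  IsBorder u w ∧ ∀ v, IsBorder v w → v.length ≤ u.length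

/-- number of closed factors of `x` of length `n`. -/
noncomputable def clComp {A : Type*} (x : ℕ → A) (n : ℕ) : ℕ :=
  {w : List A | w.length = n ∧ IsFactorOf x w ∧ IsClosedWord w}.ncard

/-- number of open factors of `x` of length `n`. -/
noncomputable def opComp {A : Type*} (x : ℕ → A) (n : ℕ) : ℕ :=
  {w : List A | w.length = n ∧ IsFactorOf x w ∧ IsOpenWord w}.ncard

/-- `x` is ultimately periodic: `x = u v v v ⋯` for some `u`, `v` with `v` nonempty,
expressed via: every finite word `u v^n` is a prefix of `x`. -/
def UltPeriodic {A : Type*} (x : ℕ → A) : Prop :=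
  ∃ u v : List A, v ≠ [] ∧ ∀ n : ℕ, OccursAt x (u ++ (List.replicate n v).flatten) 0

/-- `S ⊆ ℕ` is syndetic with gaps smaller than `d`: `S ∩ [n, n+d] ≠ ∅` for all `n`. -/
def SyndeticWithGaps (S : Set ℕ) (d : ℕ) : Prop :=
  ∀ n : ℕ, ∃ m ∈ S, n ≤ m ∧ m ≤ n + d

/-- `S ⊆ ℕ` is syndetic. -/
def Syndetic (S : Set ℕ) : Prop :=
  ∃ d : ℕ, SyndeticWithGaps S d

/-- `w` is right special in `x`: `wa` and `wb` are factors of `x` for two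
distinct letters `a ≠ b`. -/
def RightSpecial {A : Type*} (x : ℕ → A) (w : List A) : Prop :=
  ∃ a b : A, a ≠ b ∧ IsFactorOf x (w ++ [a]) ∧ IsFactorOf x (w ++ [b])

/-- `w` is left special in `x`: `aw` and `bw` are factors of `x` for two
distinct letters `a ≠ b`. -/
def LeftSpecial {A : Type*} (x : ℕ → A) (w : List A) : Prop :=
  ∃ a b : A, a ≠ b ∧ IsFactorOf x (a :: w) ∧ IsFactorOf x (b :: w)

namespace RFNS
variable {A : Type*} (x : ℕ → A)

def seg (m n : ℕ) : List A := (List.range n).map fun i => x (m + i)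

@[simp] lemma length_seg (m n : ℕ) : (seg x m n).length = n := by simp [seg]

lemma seg_getElem (m n i : ℕ) (h : i < n) : (seg x m n)[i]'(by simpa using h) = x (m+i) := by
  simp [seg]

lemma occursAt_iff_seg (w : List A) (m : ℕ) : OccursAt x w m ↔ w = seg x m w.length := Iff.rfl

lemma occursAt_seg (m n : ℕ) : OccursAt x (seg x m n) m := by
  rw [occursAt_iff_seg, length_seg]

lemma occursAt_nil (m : ℕ) : OccursAt x ([] : List A) m := rfl

lemma occursAt_singleton (c : A) (m : ℕ) : OccursAt x [c] m ↔ c = x m := by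
  simp [OccursAt, List.range_succ]

lemma seg_append (m a b : ℕ) : seg x m (a + b) = seg x m a ++ seg x (m + a) b := by
  simp [seg, List.range_add, Function.comp, add_assoc]

lemma seg_take (m n t : ℕ) (h : t ≤ n) : (seg x m n).take t = seg x m t := by
  simp [seg, ← List.map_take, List.take_range, Nat.min_eq_left h]

lemma seg_drop (m n t : ℕ) : (seg x m n).drop t = seg x (m + t) (n - t) := by
  rcases le_or_gt t n with h | h
  · have : seg x m n = seg x m t ++ seg x (m + t) (n - t) := by
      rw [← seg_append]; congr 1; omega
    rw [this, List.drop_left' (by simp)]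
  · rw [List.drop_of_length_le (by simp; omega)]
    have : n - t = 0 := by omega
    simp [this, seg]

lemma occursAt_append (a b : List A) (m : ℕ) :
    OccursAt x (a ++ b) m ↔ OccursAt x a m ∧ OccursAt x b (m + a.length) := by
  rw [occursAt_iff_seg, occursAt_iff_seg, occursAt_iff_seg]
  constructor
  · intro h
    have hlen : (a ++ b).length = a.length + b.length := by simp
    rw [hlen, seg_append] at h
    have := List.append_inj h (by simp)
    exact ⟨this.1, this.2⟩
  · rintro ⟨h1, h2⟩
    rw [List.length_append, seg_append, ← h1, ← h2]

lemma occursAt_take (w : List A) (m t : ℕ) (h : OccursAt x w m) :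
    OccursAt x (w.take t) m := by
  rw [occursAt_iff_seg] at h ⊢
  rcases le_or_gt t w.length with ht | ht
  · rw [List.length_take, Nat.min_eq_left ht]
    conv_lhs => rw [h]
    exact seg_take x m w.length t ht
  · rw [List.take_of_length_le (le_of_lt ht)] at *; exact h

lemma occursAt_drop (w : List A) (m t : ℕ) (h : OccursAt x w m) :
    OccursAt x (w.drop t) (m + t) := by
  rw [occursAt_iff_seg] at h ⊢
  rw [List.length_drop]
  conv_lhs => rw [h]
  exact seg_drop x m w.length t

lemma prefix_seg (w : List A) (m n : ℕ) (h : OccursAt x w m) (hn : w.length ≤ n) :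
    w <+: seg x m n := by
  refine ⟨seg x (m + w.length) (n - w.length), ?_⟩
  conv_lhs => rw [(occursAt_iff_seg x w m).1 h]
  simp only [length_seg]
  rw [← seg_append]
  congr 1; omega

lemma suffix_seg (w : List A) (m n : ℕ) (h : OccursAt x w (m + (n - w.length)))
    (hn : w.length ≤ n) : w <:+ seg x m n := by
  refine ⟨seg x m (n - w.length), ?_⟩
  conv_lhs => rw [(occursAt_iff_seg x w _).1 h]
  simp only [length_seg]
  rw [← seg_append]
  congr 1; omega

lemma occursAt_of_prefix_seg (w : List A) (m n : ℕ) (h : w <+: seg x m n) :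
    OccursAt x w m := by
  have hlen : w.length ≤ n := by simpa using h.length_le
  obtain ⟨t, ht⟩ := h
  have hw : w = (seg x m n).take w.length := by
    rw [← ht, List.take_left]
  rw [occursAt_iff_seg, hw, seg_take x m n _ hlen]
  rw [length_seg]

section step1
variable {x} {k d : ℕ} {u r s : List A}

/-- every occurrence of `u` is followed by `s`. -/
lemma follow_s (hk : 0 < k) (hd : 0 < d) (hr : r.length = k) (hs : s.length = k + d)
    (hf : IsFactorOf x (r ++ u ++ s))
    (H : ∀ r' s' : List A, r' <:+ r → r' ≠ r → s' <+: s → s' ≠ s →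
      ¬RightSpecial x (r' ++ u ++ s') ∧ ¬LeftSpecial x (r' ++ u ++ s'))
    {m : ℕ} (hm : OccursAt x u m) : OccursAt x s (m + u.length) := by
  obtain ⟨m₀, h₀⟩ := hf
  rw [show r ++ u ++ s = r ++ (u ++ s) by simp, occursAt_append, occursAt_append] at h₀
  obtain ⟨hr₀, hu₀, hs₀⟩ := h₀
  have hrne : r ≠ [] := by intro h; rw [h] at hr; simp at hr; omega
  have hsne : s ≠ [] := by intro h; rw [h] at hs; simp at hs; omega
  have claim : ∀ t, t ≤ k + d → OccursAt x (s.take t) (m + u.length) := by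
    intro t
    induction t with
    | zero => intro _; simpa using occursAt_nil x _
    | succ t ih =>
      intro ht
      have ht' : t < s.length := by omega
      have ihh := ih (by omega)
      set a := x (m + u.length + t) with ha
      have h1 : OccursAt x ((u ++ s.take t) ++ [a]) m := by
        rw [occursAt_append, occursAt_append]
        refine ⟨⟨hm, ihh⟩, ?_⟩
        rw [occursAt_singleton]
        simp [List.length_append, List.length_take, Nat.min_eq_left (le_of_lt ht'), ha,
          add_assoc]
      have htake : s.take (t+1) = s.take t ++ [s[t]] := by
        rw [← List.take_concat_get ht', List.concat_eq_append]
      have h2 : OccursAt x ((u ++ s.take t) ++ [s[t]]) (m₀ + r.length) := by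
        rw [List.append_assoc, ← htake, occursAt_append]
        exact ⟨hu₀, by
          have := occursAt_take x s (m₀ + r.length + u.length) (t+1) hs₀
          exact this⟩
      have hne : ¬ RightSpecial x (u ++ s.take t) := by
        have := (H [] (s.take t) List.nil_suffix (Ne.symm (by simpa using hrne))
          (List.take_prefix t s) ?_).1
        · simpa using this
        · intro hcon
          have : (s.take t).length = s.length := by rw [hcon]
          rw [List.length_take, hs] at this
          omega
      have : a = s[t] := by
        by_contra hab
        exact hne ⟨a, s[t], hab, ⟨m, h1⟩, ⟨m₀ + r.length, h2⟩⟩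
      have h3 : OccursAt x (u ++ s.take (t+1)) m := by
        rw [htake, ← List.append_assoc, ← this]
        exact h1
      rw [occursAt_append] at h3
      exact h3.2
  have := claim (k + d) le_rfl
  rwa [← hs, List.take_length] at this

/-- every occurrence of `u` at position `≥ k` is preceded by `r`. -/
lemma precede_r (hk : 0 < k) (hd : 0 < d) (hr : r.length = k) (hs : s.length = k + d)
    (hf : IsFactorOf x (r ++ u ++ s))
    (H : ∀ r' s' : List A, r' <:+ r → r' ≠ r → s' <+: s → s' ≠ s →
      ¬RightSpecial x (r' ++ u ++ s') ∧ ¬LeftSpecial x (r' ++ u ++ s'))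
    {m : ℕ} (hkm : k ≤ m) (hm : OccursAt x u m) : OccursAt x r (m - k) := by
  obtain ⟨m₀, h₀⟩ := hf
  rw [show r ++ u ++ s = r ++ (u ++ s) by simp, occursAt_append, occursAt_append] at h₀
  obtain ⟨hr₀, hu₀, hs₀⟩ := h₀
  have hsne : s ≠ [] := by intro h; rw [h] at hs; simp at hs; omega
  have claim : ∀ t, t ≤ k → OccursAt x (r.drop (k - t)) (m - t) := by
    intro t
    induction t with
    | zero =>
      intro _
      have : r.drop (k - 0) = [] := by
        rw [Nat.sub_zero, ← hr, List.drop_length]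
      rw [this]; exact occursAt_nil x _
    | succ t ih =>
      intro ht
      have ih' := ih (by omega)
      have hlt : k - (t+1) < r.length := by rw [hr]; omega
      have hdropsucc : r.drop (k - (t+1)) = r[k - (t+1)] :: r.drop (k - t) := by
        rw [List.drop_eq_getElem_cons hlt]
        congr 2
        omega
      have hlen_drop : (r.drop (k - t)).length = t := by rw [List.length_drop, hr]; omega
      set a := x (m - (t+1)) with ha
      have hB : OccursAt x (r.drop (k - t) ++ u) (m - t) := by
        rw [occursAt_append, hlen_drop]
        exact ⟨ih', by rw [show m - t + t = m by omega]; exact hm⟩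
      have h1 : OccursAt x (a :: (r.drop (k - t) ++ u)) (m - (t+1)) := by
        rw [show a :: (r.drop (k-t) ++ u) = [a] ++ (r.drop (k-t) ++ u) by simp,
          occursAt_append]
        refine ⟨(occursAt_singleton x a _).2 rfl, ?_⟩
        rw [show m - (t+1) + [a].length = m - t by simp; omega]
        exact hB
      have h2 : OccursAt x (r[k - (t+1)] :: (r.drop (k - t) ++ u)) (m₀ + (k - (t+1))) := by
        have : OccursAt x (r.drop (k - (t+1)) ++ u) (m₀ + (k - (t+1))) := by
          rw [occursAt_append]
          refine ⟨occursAt_drop x r m₀ _ hr₀, ?_⟩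
          rw [List.length_drop, hr, show m₀ + (k - (t+1)) + (k - (k - (t+1))) = m₀ + k by omega,
            ← hr]
          exact hu₀
        rwa [hdropsucc, List.cons_append] at this
      have hne : ¬ LeftSpecial x (r.drop (k - t) ++ u) := by
        have hdur : r.drop (k - t) ≠ r := by
          intro hcon
          have := congrArg List.length hcon
          rw [hlen_drop, hr] at this
          omega
        have := (H (r.drop (k - t)) [] (List.drop_suffix _ _) hdur (List.nil_prefix)
          (Ne.symm hsne)).2
        simpa using this
      have : a = r[k - (t+1)] := by
        by_contra hab
        exact hne ⟨a, r[k - (t+1)], hab, ⟨m - (t+1), h1⟩, ⟨m₀ + (k - (t+1)), h2⟩⟩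
      have h3 : OccursAt x (r.drop (k - (t+1)) ++ u) (m - (t+1)) := by
        rw [hdropsucc, List.cons_append, ← this]
        exact h1
      rw [occursAt_append] at h3
      exact h3.1
  have := claim k le_rfl
  simpa using this


lemma occursAt_shift {m m' i : ℕ} {w : List A} (h : OccursAt x w m) (h' : OccursAt x w m')
    (hi : i < w.length) : x (m + i) = x (m' + i) := by
  rw [occursAt_iff_seg] at h h'
  have hseg : seg x m w.length = seg x m' w.length := by rw [← h, ← h']
  have := congrArg (fun l => l[i]?) hseg
  simp only [List.getElem?_eq_getElem (by simpa using hi : i < (seg x m w.length).length),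
    List.getElem?_eq_getElem (by simpa using hi : i < (seg x m' w.length).length)] at this
  rw [seg_getElem x m w.length i hi, seg_getElem x m' w.length i hi] at this
  exact Option.some_injective _ this

lemma caseB (hk : 0 < k) (hd : 0 < d) (hr : r.length = k) (hs : s.length = k + d)
    (hf : IsFactorOf x (r ++ u ++ s))
    (H : ∀ r' s' : List A, r' <:+ r → r' ≠ r → s' <+: s → s' ≠ s →
      ¬RightSpecial x (r' ++ u ++ s') ∧ ¬LeftSpecial x (r' ++ u ++ s'))
    (hu : IsRecurrentFactor x u)
    (hB : ∀ p, k ≤ p → OccursAt x u p → ∃ m', OccursAt x u m' ∧ p < m' + k ∧ m' < p) :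
    UltPeriodic x := by
  classical
  set W := r ++ (u ++ s) with hWdef
  have hWlen : W.length = k + (u.length + (k + d)) := by simp [hWdef, hr, hs]
  have hW : ∀ m, k ≤ m → OccursAt x u m → OccursAt x W (m - k) := by
    intro m hkm hm
    rw [hWdef, occursAt_append, occursAt_append]
    refine ⟨precede_r hk hd hr hs hf H hkm hm, ?_, ?_⟩
    · rw [hr, Nat.sub_add_cancel hkm]; exact hm
    · rw [hr, Nat.sub_add_cancel hkm]; exact follow_s hk hd hr hs hf H hm
  obtain ⟨m₁, hm₁k, hm₁⟩ := hu k
  -- least occurrence above a point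
  have hnext : ∀ t : ℕ, ∃ j, OccursAt x u j ∧ t < j := by
    intro t
    obtain ⟨j, hj1, hj2⟩ := hu (t+1)
    exact ⟨j, hj2, by omega⟩
  set m₂ := Nat.find (hnext m₁) with hm₂def
  obtain ⟨hm₂O, hm₂gt⟩ := Nat.find_spec (hnext m₁)
  have hm₂min : ∀ j, OccursAt x u j → m₁ < j → m₂ ≤ j := by
    intro j hjO hjgt
    by_contra hlt
    exact Nat.find_min (hnext m₁) (by omega) ⟨hjO, hjgt⟩
  set γ := m₂ - m₁ with hγdef
  have hγpos : 0 < γ := by omega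
  have hγlt : γ < k := by
    obtain ⟨m', hm'O, hm'1, hm'2⟩ := hB m₂ (by omega) hm₂O
    have : m' ≤ m₁ := by
      by_contra hgt
      have := hm₂min m' hm'O (by omega)
      omega
    omega
  -- the key periodicity
  have hper : ∀ t, m₁ ≤ t → x (t + γ) = x t := by
    intro t ht
    set P : ℕ → Prop := fun j => OccursAt x u j with hPdef
    have hPa : P (Nat.findGreatest P t) := Nat.findGreatest_spec ht (show P m₁ from hm₁)
    set a := Nat.findGreatest P t with hadef
    have hat : a ≤ t := Nat.findGreatest_le t
    have ham₁ : m₁ ≤ a := Nat.le_findGreatest ht (show P m₁ from hm₁)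
    set b := Nat.find (hnext t) with hbdef
    obtain ⟨hbO, hbgt⟩ := Nat.find_spec (hnext t)
    have hbmin : ∀ j, OccursAt x u j → t < j → b ≤ j := by
      intro j hjO hjgt
      by_contra hlt
      exact Nat.find_min (hnext t) (by omega) ⟨hjO, hjgt⟩
    have hbk : k ≤ b := by omega
    have hgap : b < a + k := by
      obtain ⟨m', hm'O, hm'1, hm'2⟩ := hB b hbk hbO
      have hm't : m' ≤ t := by
        by_contra hgt
        have := hbmin m' hm'O (by omega)
        omega
      have : m' ≤ a := Nat.le_findGreatest hm't (show P m' from hm'O)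
      omega
    have hWb := hW b hbk hbO
    have hW1 := hW m₁ hm₁k hm₁
    have hW2 := hW m₂ (by omega) hm₂O
    set c := t - (b - k) with hcdef
    have hc1 : c < k := by omega
    have htc : t = (b - k) + c := by omega
    have e1 : x ((b - k) + (c + γ)) = x ((m₁ - k) + (c + γ)) :=
      occursAt_shift hWb hW1 (by rw [hWlen]; omega)
    have e2 : x ((m₁ - k) + (c + γ)) = x ((m₂ - k) + c) := by
      congr 1; omega
    have e3 : x ((m₂ - k) + c) = x ((m₁ - k) + c) :=
      occursAt_shift hW2 hW1 (by rw [hWlen]; omega)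
    have e4 : x ((m₁ - k) + c) = x ((b - k) + c) :=
      occursAt_shift hW1 hWb (by rw [hWlen]; omega)
    calc x (t + γ) = x ((b - k) + (c + γ)) := by congr 1; omega
    _ = x ((m₁ - k) + (c + γ)) := e1
    _ = x ((m₂ - k) + c) := e2
    _ = x ((m₁ - k) + c) := e3
    _ = x ((b - k) + c) := e4
    _ = x t := by congr 1; omega
  have hperiter : ∀ j t, m₁ ≤ t → x (t + j * γ) = x t := by
    intro j
    induction j with
    | zero => intro t _; simp
    | succ j ih =>
      intro t ht
      have : t + (j+1) * γ = (t + j * γ) + γ := by ring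
      rw [this, hper (t + j * γ) (by omega), ih t ht]
  -- build the ultimately periodic structure
  refine ⟨seg x 0 m₁, seg x m₁ γ, ?_, ?_⟩
  · intro hcon
    have := congrArg List.length hcon
    simp at this
    omega
  · intro n
    rw [occursAt_append]
    refine ⟨occursAt_seg x 0 m₁, ?_⟩
    simp only [length_seg, Nat.zero_add]
    induction n with
    | zero => simpa using occursAt_nil x m₁
    | succ n ih =>
      rw [List.replicate_succ', List.flatten_append]
      rw [occursAt_append]
      refine ⟨ih, ?_⟩
      have hlenf : (List.replicate n (seg x m₁ γ)).flatten.length = n * γ := by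
        simp [List.length_flatten, Nat.mul_comm]
      rw [hlenf]
      have hveq : seg x m₁ γ = seg x (m₁ + n * γ) γ := by
        apply List.ext_getElem (by simp)
        intro i h1 h2
        have hi : i < γ := by simpa using h1
        rw [seg_getElem x m₁ γ i hi, seg_getElem x (m₁ + n * γ) γ i hi]
        rw [show m₁ + n * γ + i = (m₁ + i) + n * γ by omega]
        exact (hperiter n (m₁ + i) (by omega)).symm
      rw [show List.flatten [seg x m₁ γ] = seg x m₁ γ by simp]
      rw [hveq]
      exact occursAt_seg x _ γ

lemma caseA [Fintype A] (hk : 0 < k) (hd : 0 < d) (hr : r.length = k) (hs : s.length = k + d)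
    (hf : IsFactorOf x (r ++ u ++ s))
    (H : ∀ r' s' : List A, r' <:+ r → r' ≠ r → s' <+: s → s' ≠ s →
      ¬RightSpecial x (r' ++ u ++ s') ∧ ¬LeftSpecial x (r' ++ u ++ s'))
    (hu : IsRecurrentFactor x u)
    {S : Set ℕ} (hS : SyndeticWithGaps S d)
    (hcl : ∀ n ∈ S, clComp x n < k)
    {p : ℕ} (hpk : k ≤ p) (hpO : OccursAt x u p)
    (hpgap : ∀ m', OccursAt x u m' → m' + k ≤ p ∨ p ≤ m') :
    False := by
  classical
  have hnext : ∃ j, OccursAt x u j ∧ p < j := by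
    obtain ⟨j, hj1, hj2⟩ := hu (p+1)
    exact ⟨j, hj2, by omega⟩
  set q := Nat.find hnext with hqdef
  obtain ⟨hqO, hpq⟩ := Nat.find_spec hnext
  have hqmin : ∀ j, OccursAt x u j → p < j → q ≤ j := by
    intro j hj hgt
    by_contra hlt
    exact Nat.find_min hnext (by omega) ⟨hj, hgt⟩
  set g := q - p with hgdef
  have hg : 0 < g := by omega
  obtain ⟨n, hnS, hn1, hn2⟩ := hS (u.length + g + k)
  set e := n - (u.length + g + k) with hedef
  have hne : n = u.length + g + k + e := by omega
  have hed : e ≤ d := by omega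
  have hqk : k ≤ q := by omega
  have Rp := precede_r hk hd hr hs hf H hpk hpO
  have Sp := follow_s hk hd hr hs hf H hpO
  have Rq := precede_r hk hd hr hs hf H hqk hqO
  have Sq := follow_s hk hd hr hs hf H hqO
  set ti : ℕ → List A := fun i => r.drop (k - i) ++ (u ++ s.take (k + e - i)) with htidef
  have hlen_t : ∀ i, i ≤ k → (ti i).length = u.length + k + e := by
    intro i hi
    simp only [htidef, List.length_append, List.length_drop, List.length_take, hr, hs]
    omega
  have hocc_t : ∀ i, i ≤ k → ∀ m', k ≤ m' → OccursAt x u m' → OccursAt x s (m' + u.length) →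
      OccursAt x r (m' - k) → OccursAt x (ti i) (m' - i) := by
    intro i hi m' hkm' hmO hmS hmR
    rw [htidef]
    simp only []
    rw [occursAt_append, occursAt_append]
    refine ⟨?_, ?_, ?_⟩
    · have := occursAt_drop x r (m' - k) (k - i) hmR
      rwa [show m' - k + (k - i) = m' - i by omega] at this
    · rw [List.length_drop, hr, show m' - i + (k - (k - i)) = m' by omega]
      exact hmO
    · rw [List.length_drop, hr, show m' - i + (k - (k - i)) + u.length = m' + u.length by omega]
      exact occursAt_take x s _ _ hmS
  have hta : ∀ i, i ≤ k → OccursAt x (ti i) (p - i) := fun i hi =>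
    hocc_t i hi p hpk hpO Sp Rp
  have htb : ∀ i, i ≤ k → OccursAt x (ti i) (q - i) := fun i hi =>
    hocc_t i hi q hqk hqO Sq Rq
  have hclosed : ∀ i, i < k → IsClosedWord (seg x (p - i) n) := by
    intro i hik
    have hi : i ≤ k := le_of_lt hik
    have hlt : (ti i).length = u.length + k + e := hlen_t i hi
    right
    refine ⟨ti i, ⟨?_, ?_, ?_, ?_⟩, ?_⟩
    · rw [hlt]; omega
    · rw [hlt, length_seg]; omega
    · exact prefix_seg x _ _ _ (hta i hi) (by rw [hlt]; omega)
    · apply suffix_seg x _ _ _ ?_ (by rw [hlt]; omega)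
      rw [hlt, show p - i + (n - (u.length + k + e)) = q - i by omega]
      exact htb i hi
    · have hset : occSet (ti i) (seg x (p - i) n) = {0, g} := by
        ext o
        simp only [occSet, Set.mem_setOf_eq, Set.mem_insert_iff, Set.mem_singleton_iff]
        constructor
        · intro ho
          have hlen2 := ho.length_le
          rw [List.length_drop, length_seg, hlt] at hlen2
          have hog : o ≤ g := by omega
          rw [seg_drop] at ho
          have hoc := occursAt_of_prefix_seg x _ _ _ ho
          rw [htidef] at hoc
          simp only [] at hoc
          rw [occursAt_append, occursAt_append] at hoc
          obtain ⟨h1, h2, h3⟩ := hoc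
          rw [List.length_drop, hr] at h2
          have hOu : OccursAt x u (p + o) := by
            rwa [show p - i + o + (k - (k - i)) = p + o by omega] at h2
          rcases Nat.eq_zero_or_pos o with h0 | h0
          · left; exact h0
          · right
            have := hqmin (p + o) hOu (by omega)
            omega
        · rintro (rfl | rfl)
          · rw [List.drop_zero]
            exact prefix_seg x _ _ _ (hta i hi) (by rw [hlt]; omega)
          · rw [seg_drop]
            apply prefix_seg x _ _ _ ?_ (by rw [hlt]; omega)
            rw [show p - i + g = q - i by omega]
            exact htb i hi
      rw [hset]
      exact Set.ncard_pair (by omega)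
  have hinj : ∀ i j : ℕ, i < j → j < k → seg x (p - i) n ≠ seg x (p - j) n := by
    intro i j hij hjk heq
    have hpre : u <+: (seg x (p - i) n).drop i := by
      rw [seg_drop, show p - i + i = p by omega]
      exact prefix_seg x u p _ hpO (by omega)
    rw [heq, seg_drop] at hpre
    have hOu := occursAt_of_prefix_seg x _ _ _ hpre
    rcases hpgap _ hOu with hcase | hcase
    · omega
    · omega
  set F : Fin k → List A := fun i => seg x (p - (i : ℕ)) n with hFdef
  have hsub : Set.range F ⊆ {w : List A | w.length = n ∧ IsFactorOf x w ∧ IsClosedWord w} := by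
    rintro w ⟨i, rfl⟩
    exact ⟨by simp [hFdef], ⟨p - (i : ℕ), occursAt_seg x _ n⟩, hclosed i i.2⟩
  have hfin : {w : List A | w.length = n ∧ IsFactorOf x w ∧ IsClosedWord w}.Finite :=
    (List.finite_length_eq A n).subset (fun w hw => hw.1)
  have hinj' : Function.Injective F := by
    intro i j hij
    by_contra hne
    rcases lt_trichotomy (i : ℕ) (j : ℕ) with h | h | h
    · exact hinj i j h j.2 hij
    · exact hne (Fin.ext h)
    · exact hinj j i h i.2 hij.symm
  have hcard : (Set.range F).ncard = k := by
    rw [← Set.image_univ, Set.ncard_image_of_injective _ hinj', Set.ncard_univ]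
    simp
  have hle := Set.ncard_le_ncard hsub hfin
  have hlt2 := hcl n hnS
  rw [hcard] at hle
  have : clComp x n = {w : List A | w.length = n ∧ IsFactorOf x w ∧ IsClosedWord w}.ncard := rfl
  omega

end step1
end RFNS

/-- If `x` is aperiodic with `cl_x` bounded by `k` on a syndetic set with gaps
smaller than `d`, `u` is a recurrent factor of `x`, and `r u s` is a factor of
`x` with `|r| = k` and `|s| = k + d`, then some `r' u s'` with `r'` a proper
(possibly empty) suffix of `r` and `s'` a proper (possibly empty) prefix of `s`
is right or left special in `x`. -/


theorem recurrent_factor_near_special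
    {A : Type*} [Fintype A] (x : ℕ → A) (hx : ¬ UltPeriodic x)
    (k d : ℕ) (hk : 0 < k) (hd : 0 < d)
    (S : Set ℕ) (hS : SyndeticWithGaps S d)
    (hcl : ∀ n ∈ S, clComp x n < k)
    (u r s : List A) (hu : IsRecurrentFactor x u)
    (hr : r.length = k) (hs : s.length = k + d)
    (hf : IsFactorOf x (r ++ u ++ s)) :
    ∃ r' s' : List A, r' <:+ r ∧ r' ≠ r ∧ s' <+: s ∧ s' ≠ s ∧
      (RightSpecial x (r' ++ u ++ s') ∨ LeftSpecial x (r' ++ u ++ s')) := by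
  by_contra hcon
  push_neg at hcon
  have H : ∀ r' s' : List A, r' <:+ r → r' ≠ r → s' <+: s → s' ≠ s →
      ¬RightSpecial x (r' ++ u ++ s') ∧ ¬LeftSpecial x (r' ++ u ++ s') := by
    intro r' s' h1 h2 h3 h4
    have := hcon r' s' h1 h2 h3 h4
    constructor
    · intro hR
      exact absurd (Or.inl hR) (by tauto)
    · intro hL
      exact absurd (Or.inr hL) (by tauto)
  by_cases hA : ∃ p, k ≤ p ∧ OccursAt x u p ∧ ∀ m', OccursAt x u m' → m' + k ≤ p ∨ p ≤ m'
  · obtain ⟨p, hpk, hpO, hpgap⟩ := hA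
    exact RFNS.caseA hk hd hr hs hf H hu hS hcl hpk hpO hpgap
  · push_neg at hA
    refine hx (RFNS.caseB hk hd hr hs hf H hu ?_)
    intro p hpk hpO
    obtain ⟨m', hm'O, h1, h2⟩ := hA p hpk hpO
    exact ⟨m', hm'O, by omega, by omega⟩
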